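/- arXiv:2503.00632 — 5 statements merged into one kernel-verified Lean document; each statement's English description precedes it below -/
import Mathlib

section
/- Let (X_t)_{t≥0} be a submartingale with bounded increments |X_{t+1} − X_t| ≤ b and such that E[exp(−r*(X_{t+1} − X_t)) | F_t] ≤ 1 almost surely for every t, for a constant r* > 0 independent of t. Then for X_0 = u > 0 the ruin probability P(∃ t ≥ 1, X_t ≤ 0) is at most exp(−r* u). -/
open MeasureTheory

/-- Adapted Lundberg inequality (Lemma A.6): a submartingale with bounded
increments whose increments satisfy a uniform conditional exponential-moment
bound E[exp(−r*(X_{t+1}−X_t)) | F_t] ≤ 1 a.s., started at u > 0, reaches the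
nonpositive half-line with probability at most exp(−r*·u). -/
theorem stmt_9 {Ω : Type*} {m0 : MeasurableSpace Ω} (P : Measure Ω)
    [IsProbabilityMeasure P] (F : Filtration ℕ m0)
    (X : ℕ → Ω → ℝ) (b u rstar : ℝ) (hb : 0 < b) (hu : 0 < u) (hr : 0 < rstar)
    (hsub : Submartingale X F P)
    (hX0 : ∀ ω, X 0 ω = u)
    (hbound : ∀ t, ∀ᵐ ω ∂P, |X (t + 1) ω - X t ω| ≤ b)
    (hadj : ∀ t, ∀ᵐ ω ∂P,
      (P[fun ω' => Real.exp (-rstar * (X (t + 1) ω' - X t ω')) | F t]) ω ≤ 1) :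
    P {ω | ∃ t : ℕ, 1 ≤ t ∧ X t ω ≤ 0} ≤ ENNReal.ofReal (Real.exp (-rstar * u)) := by
  classical
  set M : ℕ → Ω → ℝ := fun t ω => Real.exp (-rstar * X t ω) with hMdef
  -- a.e. lower bound on X t
  have hXlow : ∀ t : ℕ, ∀ᵐ ω ∂P, u - t * b ≤ X t ω := by
    intro t
    induction t with
    | zero => filter_upwards with ω; simp [hX0 ω]
    | succ n ih =>
      filter_upwards [ih, hbound n] with ω h1 h2
      have := abs_le.mp h2
      push_cast
      nlinarith [this.1, this.2]
  -- adaptedness of M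
  have hAdapted : StronglyAdapted F M := fun t =>
    Real.continuous_exp.comp_stronglyMeasurable ((hsub.stronglyAdapted t).const_mul (-rstar))
  -- integrability of M t
  have hMint : ∀ t : ℕ, Integrable (M t) P := by
    intro t
    refine Integrable.mono' (integrable_const (Real.exp (-rstar * (u - t * b)))) ?_ ?_
    · exact ((hAdapted t).mono (F.le t)).aestronglyMeasurable
    · filter_upwards [hXlow t] with ω hω
      rw [Real.norm_eq_abs, abs_of_pos (Real.exp_pos _)]
      exact Real.exp_le_exp.mpr (by nlinarith)
  -- integrability of the increment exponential
  have hYint : ∀ t : ℕ,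
      Integrable (fun ω' => Real.exp (-rstar * (X (t + 1) ω' - X t ω'))) P := by
    intro t
    refine Integrable.mono' (integrable_const (Real.exp (rstar * b))) ?_ ?_
    · exact (Real.continuous_exp.comp_stronglyMeasurable
        ((((hsub.stronglyMeasurable (t+1)).mono (F.le (t+1))).sub
          ((hsub.stronglyMeasurable t).mono (F.le t))).const_mul
          (-rstar))).aestronglyMeasurable
    · filter_upwards [hbound t] with ω hω
      rw [Real.norm_eq_abs, abs_of_pos (Real.exp_pos _)]
      have := (abs_le.mp hω).1
      exact Real.exp_le_exp.mpr (by nlinarith)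
  -- M is a supermartingale
  have hSuper : Supermartingale M F P := by
    refine supermartingale_nat hAdapted hMint fun t => ?_
    have heq : M (t + 1) =
        M t * fun ω' => Real.exp (-rstar * (X (t + 1) ω' - X t ω')) := by
      funext ω
      simp only [hMdef, Pi.mul_apply, ← Real.exp_add]
      congr 1
      ring
    have hcond := condExp_mul_of_stronglyMeasurable_left (μ := P) (m := F t)
      (hAdapted t) (heq ▸ hMint (t + 1)) (hYint t)
    calc P[M (t + 1)|F t] = P[M t * fun ω' => Real.exp (-rstar * (X (t + 1) ω' - X t ω'))|F t] := by
          rw [heq]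
      _ ≤ᵐ[P] M t := by
          filter_upwards [hcond, hadj t] with ω h1 h2
          rw [h1, Pi.mul_apply]
          exact mul_le_of_le_one_right (Real.exp_pos _).le h2
  have hNeg : Submartingale (-M) F P := hSuper.neg
  -- the hitting time
  set s : Set ℝ := Set.Iic (0 : ℝ) with hsdef
  have hsmeas : MeasurableSet s := measurableSet_Iic
  set τ : ℕ → Ω → WithTop ℕ := fun n ω => (hittingBtwn X s 1 n ω : ℕ) with hτdef
  have hτstop : ∀ n, IsStoppingTime F (τ n) := fun n =>
    Adapted.isStoppingTime_hittingBtwn hsub.stronglyAdapted.adapted hsmeas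
  -- expected stopped value bound
  have hstopint : ∀ n : ℕ, Integrable (stoppedValue M (τ n)) P := by
    intro n
    have := hNeg.integrable_stoppedValue (hτstop n) (fun ω => WithTop.coe_le_coe.mpr (hittingBtwn_le ω))
    have heq : stoppedValue M (τ n) = -stoppedValue (-M) (τ n) := by
      funext ω; simp [stoppedValue]
    rw [heq]; exact this.neg
  have hEM0 : ∫ ω, M 0 ω ∂P = Real.exp (-rstar * u) := by
    have : M 0 = fun _ => Real.exp (-rstar * u) := by
      funext ω; simp [hMdef, hX0 ω]
    rw [this, integral_const]; simp
  have hkey : ∀ n : ℕ, ∫ ω, stoppedValue M (τ n) ω ∂P ≤ Real.exp (-rstar * u) := by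
    intro n
    have h0 : IsStoppingTime F (fun _ : Ω => (0 : ℕ)) := isStoppingTime_const F 0
    have hmono := hNeg.expected_stoppedValue_mono h0 (hτstop n)
      (fun ω => WithTop.coe_le_coe.mpr (Nat.zero_le _)) (fun ω => WithTop.coe_le_coe.mpr (hittingBtwn_le (m := n) ω))
    have h1 : stoppedValue (-M) (fun _ : Ω => (0 : ℕ)) = fun ω => -(M 0 ω) := by
      funext ω; simp [stoppedValue]
    have h2 : stoppedValue (-M) (τ n) = fun ω => -(stoppedValue M (τ n) ω) := by
      funext ω; simp [stoppedValue]
    rw [h1, h2, integral_neg, integral_neg, neg_le_neg_iff] at hmono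
    exact hmono.trans_eq hEM0
  -- measurable approximating events
  set A : ℕ → Set Ω := fun n => {ω | ∃ t : ℕ, 1 ≤ t ∧ t ≤ n ∧ X t ω ≤ 0} with hAdef
  have hAmeas : ∀ n, MeasurableSet (A n) := by
    intro n
    have : A n = ⋃ t ∈ Set.Icc 1 n, {ω | X t ω ≤ 0} := by
      ext ω; simp [hAdef, Set.mem_Icc, and_assoc]
    rw [this]
    exact MeasurableSet.biUnion (Set.to_countable _) fun t _ =>
      measurableSet_le ((hsub.stronglyMeasurable t).mono (F.le t)).measurable
        measurable_const
  -- on A n, the stopped value of M is at least 1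
  have hge1 : ∀ n, ∀ ω ∈ A n, (1 : ℝ) ≤ stoppedValue M (τ n) ω := by
    intro n ω hω
    obtain ⟨t, ht1, htn, hXt⟩ := hω
    have hmem : stoppedValue X (fun ω ↦ ((hittingBtwn X s 1 n ω : ℕ) : WithTop ℕ)) ω ∈ s :=
      stoppedValue_hittingBtwn_mem ⟨t, ⟨ht1, htn⟩, hXt⟩
    have hle : X (hittingBtwn X s 1 n ω) ω ≤ 0 := hmem
    have : (0 : ℝ) ≤ -rstar * X (hittingBtwn X s 1 n ω) ω := by nlinarith
    calc (1 : ℝ) = Real.exp 0 := Real.exp_zero.symm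
      _ ≤ Real.exp (-rstar * X (hittingBtwn X s 1 n ω) ω) := Real.exp_le_exp.mpr this
      _ = stoppedValue M (τ n) ω := rfl
  -- measure bound for each A n
  have hPAn : ∀ n : ℕ, P (A n) ≤ ENNReal.ofReal (Real.exp (-rstar * u)) := by
    intro n
    have hint := hstopint n
    have h1 : ∫ ω in A n, (1 : ℝ) ∂P ≤ ∫ ω in A n, stoppedValue M (τ n) ω ∂P :=
      setIntegral_mono_on (integrable_const 1).integrableOn hint.integrableOn
        (hAmeas n) (hge1 n)
    have h2 : ∫ ω in A n, stoppedValue M (τ n) ω ∂P ≤ ∫ ω, stoppedValue M (τ n) ω ∂P := by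
      refine setIntegral_le_integral hint ?_
      filter_upwards with ω
      exact (Real.exp_pos _).le
    have h3 : (P (A n)).toReal ≤ Real.exp (-rstar * u) := by
      have := (h1.trans h2).trans (hkey n)
      simpa [measureReal_def] using this
    calc P (A n) = ENNReal.ofReal ((P (A n)).toReal) :=
          (ENNReal.ofReal_toReal (measure_ne_top P _)).symm
      _ ≤ ENNReal.ofReal (Real.exp (-rstar * u)) := ENNReal.ofReal_le_ofReal h3
  -- pass to the union
  have hUnion : {ω | ∃ t : ℕ, 1 ≤ t ∧ X t ω ≤ 0} = ⋃ n, A n := by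
    ext ω
    simp only [Set.mem_setOf_eq, Set.mem_iUnion, hAdef]
    constructor
    · rintro ⟨t, ht1, hXt⟩; exact ⟨t, t, ht1, le_rfl, hXt⟩
    · rintro ⟨n, t, ht1, _, hXt⟩; exact ⟨t, ht1, hXt⟩
  rw [hUnion]
  have hmonoA : Monotone A := by
    intro i j hij ω hω
    obtain ⟨t, ht1, hti, hXt⟩ := hω
    exact ⟨t, ht1, hti.trans hij, hXt⟩
  rw [hmonoA.directed_le.measure_iUnion]
  exact iSup_le hPAn
end

section
/- Let (X_t) be a submartingale with E[X_{t+1} | F_t] ≥ X_t + c for a constant c > 0, integer-valued bounded increments Z_{t+1} = X_{t+1} − X_t with |Z_{t+1}| ≤ b, and P(Z_{t+1} ≥ z* | F_t) ≥ l, P(Z_{t+1} ≤ −z* | F_t) ≥ l for constants z*, l > 0. Then there is a constant p* > 0, independent of initial conditions, such that P(X_t > X_1 for all t ≥ 2 | F_1) ≥ p* on the event Z_1 ≥ z*. -/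
open MeasureTheory

lemma exp_le_one_add_add_sq {x : ℝ} (hx : |x| ≤ 1) : Real.exp x ≤ 1 + x + x ^ 2 := by
  have h := Real.exp_bound hx (by norm_num : 0 < 2)
  have hsum : ∑ i ∈ Finset.range 2, x ^ i / (Nat.factorial i) = 1 + x := by
    simp [Finset.sum_range_succ]
  rw [hsum] at h
  have h2 := (abs_le.mp h).2
  norm_num at h2
  nlinarith [sq_abs x]

/-- Conditional Lundberg bound. -/
lemma lundberg {Ω : Type*} {m0 : MeasurableSpace Ω} (P : Measure Ω)
    [IsProbabilityMeasure P] (F : Filtration ℕ m0)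
    (X : ℕ → Ω → ℝ) (c b r : ℝ) (hb : 0 < b) (hr0 : 0 < r)
    (hrb : r * b ≤ 1) (hrb2 : r * b ^ 2 ≤ c)
    (hsub : Submartingale X F P)
    (hdrift : ∀ t, ∀ᵐ ω ∂P, X t ω + c ≤ (P[X (t + 1) | F t]) ω)
    (hbound : ∀ t, ∀ᵐ ω ∂P, |X (t + 1) ω - X t ω| ≤ b) (t : ℕ) :
    (P[fun ω => Real.exp (-(r * (X (t + 1) ω - X t ω))) | F t]) ≤ᵐ[P] fun _ => (1 : ℝ) := by
  have hXm : ∀ u, Measurable (X u) := fun u =>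
    ((hsub.stronglyAdapted u).mono (F.le u)).measurable
  set Z : Ω → ℝ := fun ω => X (t + 1) ω - X t ω with hZdef
  have hZm : Measurable Z := (hXm (t + 1)).sub (hXm t)
  have hZint : Integrable Z P := (hsub.integrable (t + 1)).sub (hsub.integrable t)
  have hgm : Measurable fun ω => Real.exp (-(r * Z ω)) :=
    Real.measurable_exp.comp (measurable_const.mul hZm).neg
  have hgint : Integrable (fun ω => Real.exp (-(r * Z ω))) P := by
    refine Integrable.mono' (integrable_const (Real.exp (r * b))) hgm.aestronglyMeasurable ?_
    filter_upwards [hbound t] with ω hω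
    rw [Real.norm_eq_abs, Real.abs_exp]
    apply Real.exp_le_exp.mpr
    have h1 := abs_le.mp hω
    have hZω : Z ω = X (t + 1) ω - X t ω := rfl
    rw [hZω]
    nlinarith
  have hquad : (fun ω => Real.exp (-(r * Z ω))) ≤ᵐ[P]
      (fun _ => 1 + r ^ 2 * b ^ 2) - r • Z := by
    filter_upwards [hbound t] with ω hω
    have h1 := abs_le.mp hω
    have habs : |(-(r * Z ω))| ≤ 1 := by
      rw [abs_neg, abs_mul, abs_of_pos hr0]
      have hZω : |Z ω| = |X (t + 1) ω - X t ω| := rfl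
      rw [hZω]
      have : r * |X (t + 1) ω - X t ω| ≤ r * b :=
        mul_le_mul_of_nonneg_left hω hr0.le
      exact this.trans hrb
    have h2 := exp_le_one_add_add_sq habs
    simp only [Pi.sub_apply, Pi.smul_apply, smul_eq_mul]
    have hZω : Z ω = X (t + 1) ω - X t ω := rfl
    rw [hZω] at h2 ⊢
    nlinarith [mul_le_mul_of_nonneg_left (sq_le_sq' h1.1 h1.2) (sq_nonneg r)]
  have hRHSint : Integrable ((fun _ : Ω => 1 + r ^ 2 * b ^ 2) - r • Z) P :=
    (integrable_const _).sub (hZint.smul r)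
  have hmono := condExp_mono (m := F t) hgint hRHSint hquad
  have hsubc := condExp_sub (m := F t) (μ := P)
    (integrable_const (1 + r ^ 2 * b ^ 2)) (hZint.smul r)
  have hsml := condExp_smul (m := F t) (μ := P) r Z
  have hZc : (P[Z | F t]) =ᵐ[P] fun ω => (P[X (t + 1) | F t]) ω - X t ω := by
    have h1 := condExp_sub (m := F t) (μ := P) (hsub.integrable (t + 1)) (hsub.integrable t)
    have h2 : (P[X t | F t]) = X t :=
      condExp_of_stronglyMeasurable (F.le t) (hsub.stronglyAdapted t) (hsub.integrable t)
    have h3 : Z = X (t + 1) - X t := rfl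
    rw [h3]
    filter_upwards [h1] with ω hω
    rw [hω]
    simp [h2]
  have hZdrift : ∀ᵐ ω ∂P, c ≤ (P[Z | F t]) ω := by
    filter_upwards [hZc, hdrift t] with ω h1 h2
    rw [h1]; linarith
  calc (P[fun ω => Real.exp (-(r * Z ω)) | F t])
      ≤ᵐ[P] P[(fun _ : Ω => 1 + r ^ 2 * b ^ 2) - r • Z | F t] := hmono
    _ ≤ᵐ[P] fun _ => (1 : ℝ) := by
        filter_upwards [hsubc, hsml, hZdrift] with ω h1 h2 h3
        rw [h1]
        simp only [Pi.sub_apply, Pi.smul_apply, smul_eq_mul] at h2 ⊢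
        rw [condExp_const (F.le t)]
        rw [h2]
        have hb2 : r ^ 2 * b ^ 2 ≤ r * c := by nlinarith
        have hbeta : (fun _ : Ω => 1 + r ^ 2 * b ^ 2) ω = 1 + r ^ 2 * b ^ 2 := rfl
        rw [hbeta]
        nlinarith [mul_le_mul_of_nonneg_left h3 hr0.le]


/-- Key fixation step of Theorem 4.3: a submartingale with uniformly positive
drift, integer-valued bounded increments, and two-sided conditional increment
probabilities admits a constant p* > 0 such that, conditionally on F_1, on the
event that the first increment is at least z*, the process stays strictly above
its initial level forever with conditional probability at least p*. -/
theorem stmt_11 {Ω : Type*} {m0 : MeasurableSpace Ω} (P : Measure Ω)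
    [IsProbabilityMeasure P] (F : Filtration ℕ m0)
    (X : ℕ → Ω → ℝ) (c b zstar l : ℝ)
    (hc : 0 < c) (hb : 0 < b) (hzstar : 0 < zstar) (hl : 0 < l) (hl1 : l < 1)
    (hsub : Submartingale X F P)
    (hdrift : ∀ t, ∀ᵐ ω ∂P, X t ω + c ≤ (P[X (t + 1) | F t]) ω)
    (hint : ∀ t, ∀ᵐ ω ∂P, ∃ k : ℤ, X (t + 1) ω - X t ω = (k : ℝ))
    (hbound : ∀ t, ∀ᵐ ω ∂P, |X (t + 1) ω - X t ω| ≤ b)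
    (hpos : ∀ t, ∀ᵐ ω ∂P,
      l ≤ (P[Set.indicator {ω' | zstar ≤ X (t + 1) ω' - X t ω'}
              (fun _ => (1 : ℝ)) | F t]) ω)
    (hneg : ∀ t, ∀ᵐ ω ∂P,
      l ≤ (P[Set.indicator {ω' | X (t + 1) ω' - X t ω' ≤ -zstar}
              (fun _ => (1 : ℝ)) | F t]) ω) :
    ∃ pstar : ℝ, 0 < pstar ∧ ∀ᵐ ω ∂P,
      zstar ≤ X 1 ω - X 0 ω →
        pstar ≤ (P[Set.indicator {ω' | ∀ t : ℕ, 2 ≤ t → X 1 ω' < X t ω'}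
                    (fun _ => (1 : ℝ)) | F 1]) ω := by
  classical
  -- the Lundberg exponent
  set r : ℝ := min (1 / b) (c / b ^ 2) with hr_def
  have hr0 : 0 < r := lt_min (by positivity) (by positivity)
  have hrb : r * b ≤ 1 := by
    have h := min_le_left (1 / b) (c / b ^ 2)
    calc r * b ≤ (1 / b) * b := by nlinarith
      _ = 1 := by field_simp
  have hrb2 : r * b ^ 2 ≤ c := by
    have h := min_le_right (1 / b) (c / b ^ 2)
    calc r * b ^ 2 ≤ (c / b ^ 2) * b ^ 2 := by nlinarith [sq_nonneg b]
      _ = c := by field_simp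
  have hez : Real.exp (-(r * zstar)) < 1 := by
    rw [Real.exp_lt_one_iff]; nlinarith
  have hXm : ∀ u, Measurable (X u) := fun u => ((hsub.stronglyAdapted u).mono (F.le u)).measurable
  have hLund := lundberg P F X c b r hb hr0 hrb hrb2 hsub hdrift hbound
  -- the shifted filtration and exponential supermartingale
  set G : Filtration ℕ m0 :=
    { seq := fun t => F (t + 2)
      mono' := fun i j hij => F.mono (by omega)
      le' := fun t => F.le _ } with hGdef
  set N : ℕ → Ω → ℝ := fun t ω => Real.exp (-(r * (X (t + 2) ω - X 1 ω))) with hNdef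
  have hNadp : StronglyAdapted G N := by
    intro t
    show StronglyMeasurable[F (t + 2)] (N t)
    have h1 : StronglyMeasurable[F (t + 2)] fun ω => X (t + 2) ω - X 1 ω :=
      (hsub.stronglyAdapted (t + 2)).sub ((hsub.stronglyAdapted 1).mono (F.mono (by omega)))
    exact Real.continuous_exp.comp_stronglyMeasurable ((h1.const_mul r).neg)
  have hdiff : ∀ t : ℕ, ∀ᵐ ω ∂P, |X (t + 1) ω - X 1 ω| ≤ t * b := by
    intro t
    induction t with
    | zero => filter_upwards with ω; simp
    | succ t ih =>
      filter_upwards [ih, hbound (t + 1)] with ω h1 h2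
      have h3 : |X (t + 2) ω - X 1 ω| ≤ |X (t + 2) ω - X (t + 1) ω| + |X (t + 1) ω - X 1 ω| := by
        have := abs_sub_abs_le_abs_sub (X (t + 2) ω - X 1 ω) (X (t + 1) ω - X 1 ω)
        calc |X (t + 2) ω - X 1 ω|
            = |(X (t + 2) ω - X (t + 1) ω) + (X (t + 1) ω - X 1 ω)| := by ring_nf
          _ ≤ _ := abs_add_le _ _
      push_cast
      calc |X (t + 1 + 1) ω - X 1 ω| ≤ b + t * b := by
            have h2' : |X (t + 2) ω - X (t + 1) ω| ≤ b := h2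
            have : |X (t + 1 + 1) ω - X 1 ω| = |X (t + 2) ω - X 1 ω| := rfl
            rw [this]; linarith
        _ = (t + 1) * b := by ring
  have hNm : ∀ t, Measurable (N t) := fun t =>
    Real.measurable_exp.comp (measurable_const.mul ((hXm (t + 2)).sub (hXm 1))).neg
  have hNnonneg : ∀ t ω, 0 ≤ N t ω := fun t ω => Real.exp_nonneg _
  have hNint : ∀ t, Integrable (N t) P := by
    intro t
    refine Integrable.mono' (integrable_const (Real.exp (r * ((t + 1) * b))))
      (hNm t).aestronglyMeasurable ?_
    filter_upwards [hdiff (t + 1)] with ω hω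
    rw [Real.norm_eq_abs, Real.abs_exp]
    apply Real.exp_le_exp.mpr
    have h1 := abs_le.mp hω
    have h2 : N t ω = Real.exp (-(r * (X (t + 2) ω - X 1 ω))) := rfl
    push_cast at h1
    nlinarith [h1.1, h1.2]
  have hNone : ∀ t, (P[N (t + 1) | G t]) ≤ᵐ[P] N t := by
    intro t
    have hfactor : N (t + 1) = N t * fun ω => Real.exp (-(r * (X (t + 3) ω - X (t + 2) ω))) := by
      funext ω
      show Real.exp (-(r * (X (t + 3) ω - X 1 ω)))
        = Real.exp (-(r * (X (t + 2) ω - X 1 ω))) * Real.exp (-(r * (X (t + 3) ω - X (t + 2) ω)))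
      rw [← Real.exp_add]
      congr 1
      ring
    have hgint : Integrable (fun ω => Real.exp (-(r * (X (t + 3) ω - X (t + 2) ω)))) P := by
      refine Integrable.mono' (integrable_const (Real.exp (r * b)))
        ((Real.measurable_exp.comp (measurable_const.mul
          ((hXm (t + 3)).sub (hXm (t + 2)))).neg).aestronglyMeasurable) ?_
      filter_upwards [hbound (t + 2)] with ω hω
      rw [Real.norm_eq_abs, Real.abs_exp]
      apply Real.exp_le_exp.mpr
      have h1 := abs_le.mp hω
      nlinarith [h1.1, h1.2]
    have hfgint : Integrable (N t * fun ω => Real.exp (-(r * (X (t + 3) ω - X (t + 2) ω)))) P := by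
      rw [← hfactor]; exact hNint (t + 1)
    have hNsm : StronglyMeasurable[F (t + 2)] (N t) := hNadp t
    have hmul := condExp_mul_of_stronglyMeasurable_left (μ := P) hNsm hfgint hgint
    have hL := hLund (t + 2)
    show (P[N (t + 1) | F (t + 2)]) ≤ᵐ[P] N t
    rw [hfactor]
    filter_upwards [hmul, hL] with ω h1 h2
    rw [h1]
    simp only [Pi.mul_apply]
    calc N t ω * (P[fun ω => Real.exp (-(r * (X (t + 2 + 1) ω - X (t + 2) ω))) | F (t + 2)]) ω
        ≤ N t ω * 1 := by
          exact mul_le_mul_of_nonneg_left h2 (hNnonneg t ω)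
      _ = N t ω := mul_one _
  have hNsuper : Supermartingale N G P := supermartingale_nat hNadp hNint hNone
  -- sets
  set A2 : Set Ω := {ω' | zstar ≤ X (1 + 1) ω' - X 1 ω'} with hA2def
  set S : Set Ω := {ω' | ∀ t : ℕ, 2 ≤ t → X 1 ω' < X t ω'} with hSdef
  set D : Set Ω := {ω | ∃ u : ℕ, 1 ≤ N u ω} with hDdef
  set Dn : ℕ → Set Ω := fun n => {ω | ∃ u ≤ n, 1 ≤ N u ω} with hDndef
  have hA2F2 : MeasurableSet[F 2] A2 := by
    have h1 : Measurable[F 2] fun ω => X (1 + 1) ω - X 1 ω :=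
      ((hsub.stronglyAdapted 2).measurable.sub
        (((hsub.stronglyAdapted 1).mono (F.mono one_le_two)).measurable))
    exact measurableSet_le measurable_const h1
  have hA2m0 : MeasurableSet A2 := F.le 2 _ hA2F2
  have hSmeas : MeasurableSet S := by
    have h1 : S = ⋂ t : ℕ, {ω' | 2 ≤ t → X 1 ω' < X t ω'} := by
      ext ω; simp [hSdef, Set.mem_iInter]
    rw [h1]
    refine MeasurableSet.iInter fun t => ?_
    by_cases ht : 2 ≤ t
    · have : {ω' | 2 ≤ t → X 1 ω' < X t ω'} = {ω' | X 1 ω' < X t ω'} := by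
        ext ω; simp [ht]
      rw [this]
      exact measurableSet_lt (hXm 1) (hXm t)
    · have : {ω' | 2 ≤ t → X 1 ω' < X t ω'} = Set.univ := by
        ext ω; simp [ht]
      rw [this]; exact MeasurableSet.univ
  have hDnmeas : ∀ n, MeasurableSet (Dn n) := by
    intro n
    have h1 : Dn n = ⋃ u, ⋃ _ : u ≤ n, {ω | 1 ≤ N u ω} := by
      ext ω; simp [hDndef]
    rw [h1]
    exact MeasurableSet.iUnion fun u => MeasurableSet.iUnion fun _ =>
      measurableSet_le measurable_const (hNm u)
  have hDmeas : MeasurableSet D := by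
    have h1 : D = ⋃ u, {ω | 1 ≤ N u ω} := by ext ω; simp [hDdef]
    rw [h1]
    exact MeasurableSet.iUnion fun u => measurableSet_le measurable_const (hNm u)
  -- the key drop estimate
  have hdrop : ∀ E : Set Ω, MeasurableSet[F 2] E → E ⊆ A2 →
      (P (D ∩ E)).toReal ≤ Real.exp (-(r * zstar)) * (P E).toReal := by
    intro E hE2 hEA2
    have hEG0 : MeasurableSet[G 0] E := hE2
    have hEm0 : MeasurableSet E := F.le 2 _ hE2
    have hn : ∀ n : ℕ, (P (Dn n ∩ E)).toReal ≤ Real.exp (-(r * zstar)) * (P E).toReal := by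
      intro n
      set τ : Ω → WithTop ℕ := fun ω => (hittingBtwn N {x : ℝ | 1 ≤ x} 0 n ω : ℕ) with hτdef
      have hτstop : IsStoppingTime G τ :=
        hNadp.adapted.isStoppingTime_hittingBtwn measurableSet_Ici
      have hsp : Supermartingale (MeasureTheory.stoppedProcess N τ) G P := by
        have h1 : Submartingale (MeasureTheory.stoppedProcess (-N) τ) G P :=
          hNsuper.neg.stoppedProcess hτstop
        have h2 : MeasureTheory.stoppedProcess (-N) τ = -(MeasureTheory.stoppedProcess N τ) := rfl
        rw [h2] at h1
        have h3 := h1.neg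
        rwa [neg_neg] at h3
      have hpt : ∀ ω, Set.indicator (Dn n) (fun _ => (1 : ℝ)) ω
          ≤ MeasureTheory.stoppedProcess N τ n ω := by
        intro ω
        by_cases hω : ω ∈ Dn n
        · rw [Set.indicator_of_mem hω]
          obtain ⟨u, hun, hu1⟩ := hω
          have hmem : N (hittingBtwn N {x : ℝ | 1 ≤ x} 0 n ω) ω ∈ {x : ℝ | 1 ≤ x} :=
            hittingBtwn_mem_set ⟨u, ⟨Nat.zero_le _, hun⟩, hu1⟩
          have hle : τ ω ≤ n := WithTop.coe_le_coe.mpr (hittingBtwn_le ω)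
          rw [stoppedProcess_eq_of_ge (i := n) hle]
          exact hmem
        · rw [Set.indicator_of_notMem hω]
          exact hNnonneg _ ω
      have hindint : Integrable (Set.indicator (Dn n) fun _ => (1 : ℝ)) P :=
        (integrable_const (1 : ℝ)).indicator (hDnmeas n)
      have hi1 : ∫ ω in E, Set.indicator (Dn n) (fun _ => (1 : ℝ)) ω ∂P
          ≤ ∫ ω in E, MeasureTheory.stoppedProcess N τ n ω ∂P := by
        refine integral_mono hindint.integrableOn (hsp.integrable n).integrableOn ?_
        intro ω; exact hpt ω
      have hi2 : ∫ ω in E, MeasureTheory.stoppedProcess N τ n ω ∂P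
          ≤ ∫ ω in E, MeasureTheory.stoppedProcess N τ 0 ω ∂P :=
        hsp.setIntegral_le (Nat.zero_le n) hEG0
      have hsp0 : MeasureTheory.stoppedProcess N τ 0 = N 0 := by
        funext ω
        exact stoppedProcess_eq_of_le (by simp)
      have hi3 : ∫ ω in E, N 0 ω ∂P ≤ ∫ _ω in E, Real.exp (-(r * zstar)) ∂P := by
        refine setIntegral_mono_on (hNint 0).integrableOn
          (integrable_const _).integrableOn hEm0 ?_
        intro ω hω
        have hA2ω : zstar ≤ X (1 + 1) ω - X 1 ω := hEA2 hω
        show Real.exp (-(r * (X (0 + 2) ω - X 1 ω))) ≤ Real.exp (-(r * zstar))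
        apply Real.exp_le_exp.mpr
        have : X (0 + 2) ω = X (1 + 1) ω := rfl
        rw [this]
        nlinarith
      have hiconst : ∫ _ω in E, Real.exp (-(r * zstar)) ∂P
          = Real.exp (-(r * zstar)) * (P E).toReal := by
        rw [setIntegral_const, smul_eq_mul, mul_comm, measureReal_def]
      have hind : ∫ ω in E, Set.indicator (Dn n) (fun _ => (1 : ℝ)) ω ∂P
          = (P (Dn n ∩ E)).toReal := by
        rw [integral_indicator_const _ (hDnmeas n), measureReal_restrict_apply (hDnmeas n), measureReal_def,
          smul_eq_mul, mul_one]
      calc (P (Dn n ∩ E)).toReal = _ := hind.symm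
        _ ≤ ∫ ω in E, MeasureTheory.stoppedProcess N τ n ω ∂P := hi1
        _ ≤ ∫ ω in E, MeasureTheory.stoppedProcess N τ 0 ω ∂P := hi2
        _ = ∫ ω in E, N 0 ω ∂P := by rw [hsp0]
        _ ≤ ∫ _ω in E, Real.exp (-(r * zstar)) ∂P := hi3
        _ = Real.exp (-(r * zstar)) * (P E).toReal := hiconst
    -- pass to the limit
    have hmono : Monotone fun n => Dn n ∩ E := by
      intro i j hij ω hω
      obtain ⟨⟨u, hu, h1⟩, h2⟩ := hω
      exact ⟨⟨u, hu.trans hij, h1⟩, h2⟩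
    have hunion : ⋃ n, (Dn n ∩ E) = D ∩ E := by
      ext ω
      simp only [Set.mem_iUnion, Set.mem_inter_iff, hDndef, hDdef, Set.mem_setOf_eq]
      constructor
      · rintro ⟨n, ⟨u, _, h1⟩, h2⟩; exact ⟨⟨u, h1⟩, h2⟩
      · rintro ⟨⟨u, h1⟩, h2⟩; exact ⟨u, ⟨u, le_rfl, h1⟩, h2⟩
    have htend := tendsto_measure_iUnion_atTop (μ := P) hmono
    rw [hunion] at htend
    have htoReal : Filter.Tendsto (fun n => (P (Dn n ∩ E)).toReal) Filter.atTop
        (nhds (P (D ∩ E)).toReal) :=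
      (ENNReal.tendsto_toReal (measure_ne_top P (D ∩ E))).comp htend
    exact le_of_tendsto htoReal (Filter.Eventually.of_forall hn)
  -- integrability of indicators
  have hindSint : Integrable (Set.indicator S fun _ => (1 : ℝ)) P :=
    (integrable_const (1 : ℝ)).indicator hSmeas
  have hindA2int : Integrable (Set.indicator A2 fun _ => (1 : ℝ)) P :=
    (integrable_const (1 : ℝ)).indicator hA2m0
  have hA2Dmeas : MeasurableSet (A2 ∩ D) := hA2m0.inter hDmeas
  have hindA2Dint : Integrable (Set.indicator (A2 ∩ D) fun _ => (1 : ℝ)) P :=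
    (integrable_const (1 : ℝ)).indicator hA2Dmeas
  -- pointwise comparison of indicators
  have hptS : ∀ ω, Set.indicator A2 (fun _ => (1 : ℝ)) ω
      - Set.indicator (A2 ∩ D) (fun _ => (1 : ℝ)) ω ≤ Set.indicator S (fun _ => (1 : ℝ)) ω := by
    intro ω
    by_cases h1 : ω ∈ A2
    · by_cases h2 : ω ∈ D
      · rw [Set.indicator_of_mem h1, Set.indicator_of_mem (Set.mem_inter h1 h2)]
        simp only [sub_self]
        exact Set.indicator_nonneg (fun _ _ => zero_le_one) ω
      · have hS : ω ∈ S := by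
          show ∀ t : ℕ, 2 ≤ t → X 1 ω < X t ω
          intro t ht
          have hnott : ¬ (1 : ℝ) ≤ N (t - 2) ω := fun hcon => h2 ⟨t - 2, hcon⟩
          push_neg at hnott
          have hlt : Real.exp (-(r * (X (t - 2 + 2) ω - X 1 ω))) < 1 := hnott
          rw [Real.exp_lt_one_iff] at hlt
          have hidx : t - 2 + 2 = t := by omega
          rw [hidx] at hlt
          nlinarith
        rw [Set.indicator_of_mem h1, Set.indicator_of_mem hS,
          Set.indicator_of_notMem (fun hcon => h2 hcon.2)]
        norm_num
    · rw [Set.indicator_of_notMem h1,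
        Set.indicator_of_notMem (fun hcon => h1 hcon.1)]
      simp only [sub_self]
      exact Set.indicator_nonneg (fun _ _ => zero_le_one) ω
  -- the key set-integral estimate
  have key : ∀ C : Set Ω, MeasurableSet[F 1] C →
      l * (1 - Real.exp (-(r * zstar))) * (P C).toReal
        ≤ ∫ ω in C, Set.indicator S (fun _ => (1 : ℝ)) ω ∂P := by
    intro C hC1
    have hCF2 : MeasurableSet[F 2] C := (F.mono one_le_two) _ hC1
    set E := C ∩ A2 with hEdef
    have hE2 : MeasurableSet[F 2] E := hCF2.inter hA2F2
    have hEA2 : E ⊆ A2 := Set.inter_subset_right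
    have hIA2 : ∫ ω in C, Set.indicator A2 (fun _ => (1 : ℝ)) ω ∂P = (P E).toReal := by
      rw [integral_indicator_const _ hA2m0, measureReal_restrict_apply hA2m0, measureReal_def, smul_eq_mul,
        mul_one, Set.inter_comm]
    have hIA2low : l * (P C).toReal ≤ (P E).toReal := by
      rw [← hIA2]
      have hA2c : ∫ ω in C, Set.indicator A2 (fun _ => (1 : ℝ)) ω ∂P
          = ∫ ω in C, (P[Set.indicator A2 (fun _ => (1 : ℝ)) | F 1]) ω ∂P :=
        (setIntegral_condExp (F.le 1) hindA2int hC1).symm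
      rw [hA2c]
      have hconst : ∫ _ω in C, l ∂P = l * (P C).toReal := by
        rw [setIntegral_const, smul_eq_mul, mul_comm, measureReal_def]
      rw [← hconst]
      exact setIntegral_mono_ae (integrable_const l).integrableOn
        integrable_condExp.integrableOn (hpos 1)
    have hIA2D : ∫ ω in C, Set.indicator (A2 ∩ D) (fun _ => (1 : ℝ)) ω ∂P
        = (P (D ∩ E)).toReal := by
      rw [integral_indicator_const _ hA2Dmeas, measureReal_restrict_apply hA2Dmeas, measureReal_def,
        smul_eq_mul, mul_one]
      have hset : (A2 ∩ D) ∩ C = D ∩ E := by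
        rw [hEdef]
        ext ω
        simp only [Set.mem_inter_iff]
        tauto
      rw [hset]
    have hIS : ∫ ω in C, (Set.indicator A2 (fun _ => (1 : ℝ)) ω
          - Set.indicator (A2 ∩ D) (fun _ => (1 : ℝ)) ω) ∂P
        ≤ ∫ ω in C, Set.indicator S (fun _ => (1 : ℝ)) ω ∂P :=
      integral_mono (hindA2int.sub hindA2Dint).integrableOn hindSint.integrableOn
        fun ω => hptS ω
    have hsplit : ∫ ω in C, (Set.indicator A2 (fun _ => (1 : ℝ)) ω
          - Set.indicator (A2 ∩ D) (fun _ => (1 : ℝ)) ω) ∂P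
        = (P E).toReal - (P (D ∩ E)).toReal := by
      rw [integral_sub hindA2int.integrableOn hindA2Dint.integrableOn, hIA2, hIA2D]
    have hdropE := hdrop E hE2 hEA2
    have hexp0 : (0 : ℝ) ≤ Real.exp (-(r * zstar)) := Real.exp_nonneg _
    have h1e : (0 : ℝ) ≤ 1 - Real.exp (-(r * zstar)) := by linarith
    have hmul := mul_le_mul_of_nonneg_left hIA2low h1e
    rw [hsplit] at hIS
    nlinarith
  -- conclude via the trimmed measure
  refine ⟨l * (1 - Real.exp (-(r * zstar))), by nlinarith, ?_⟩
  have hfm : StronglyMeasurable[F 1] fun ω =>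
      (P[Set.indicator S (fun _ => (1 : ℝ)) | F 1]) ω - l * (1 - Real.exp (-(r * zstar))) :=
    stronglyMeasurable_condExp.sub stronglyMeasurable_const
  have hfi : Integrable (fun ω =>
      (P[Set.indicator S (fun _ => (1 : ℝ)) | F 1]) ω - l * (1 - Real.exp (-(r * zstar)))) P :=
    integrable_condExp.sub (integrable_const _)
  have h0 : (0 : Ω → ℝ) ≤ᵐ[P.trim (F.le 1)] fun ω =>
      (P[Set.indicator S (fun _ => (1 : ℝ)) | F 1]) ω - l * (1 - Real.exp (-(r * zstar))) := by
    refine ae_nonneg_of_forall_setIntegral_nonneg (hfi.trim (F.le 1) hfm) ?_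
    intro s hs _
    rw [← setIntegral_trim (F.le 1) hfm hs]
    have h1 : ∫ ω in s, ((P[Set.indicator S (fun _ => (1 : ℝ)) | F 1]) ω
          - l * (1 - Real.exp (-(r * zstar)))) ∂P
        = ∫ ω in s, (P[Set.indicator S (fun _ => (1 : ℝ)) | F 1]) ω ∂P
          - l * (1 - Real.exp (-(r * zstar))) * (P s).toReal := by
      rw [integral_sub integrable_condExp.integrableOn (integrable_const _).integrableOn,
        setIntegral_const, smul_eq_mul, mul_comm, measureReal_def]
    rw [h1, setIntegral_condExp (F.le 1) hindSint hs]
    have := key s hs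
    linarith
  have h0' := ae_le_of_ae_le_trim h0
  filter_upwards [h0'] with ω hω _
  have hω' : (0 : ℝ) ≤ (P[Set.indicator S (fun _ => (1 : ℝ)) | F 1]) ω
      - l * (1 - Real.exp (-(r * zstar))) := hω
  linarith
end

section
/- Let (U_i(t))_{i=1}^N be processes with uniformly bounded increments such that, for each i, E[U_i(t+1) − U_i(t) | F_t] = (M/N)f_i(U_i(t)) − (1 − M/N)g_i(U_i(t)) where f_i is nondecreasing with limit f⁺ at +∞ and g_i is nonincreasing with limit g⁻ at +∞, and suppose U_i(t) → +∞ a.s. for all i. Then for each i, (U_i(t) − U_i(0))/t → (M/N)f⁺ − ((N−M)/N)g⁻ almost surely. -/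
open MeasureTheory Filter
open Finset Topology
open scoped ENNReal NNReal

section Aux

lemma kron_aux (a : ℕ → ℝ) (n : ℕ) :
    ∑ s ∈ range n, a s
      = n * (∑ s ∈ range n, a s / (s + 1)) - ∑ s ∈ range n, (∑ t ∈ range s, a t / (t + 1)) := by
  induction n with
  | zero => simp
  | succ n ih =>
    have hne : ((n : ℝ) + 1) ≠ 0 := by positivity
    rw [sum_range_succ, ih, sum_range_succ (fun s => ∑ t ∈ range s, a t / (t+1)),
      sum_range_succ (fun s => a s / (s+1))]
    push_cast
    field_simp
    ring

lemma kron (a : ℕ → ℝ) (l : ℝ)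
    (h : Tendsto (fun n => ∑ s ∈ range n, a s / (s + 1)) atTop (𝓝 l)) :
    Tendsto (fun n => (∑ s ∈ range n, a s) / n) atTop (𝓝 0) := by
  have hc := h.cesaro
  have h2 : Tendsto (fun n : ℕ => (∑ s ∈ range n, a s / (s+1))
      - (n : ℝ)⁻¹ * ∑ s ∈ range n, (∑ t ∈ range s, a t / (t+1))) atTop (𝓝 (l - l)) :=
    h.sub hc
  rw [sub_self] at h2
  apply h2.congr'
  filter_upwards [Ici_mem_atTop 1] with n hn
  have hne : (n : ℝ) ≠ 0 := Nat.cast_ne_zero.2 (by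
    have := Set.mem_Ici.mp hn; omega)
  rw [kron_aux a n, sub_div, mul_div_cancel_left₀ _ hne, div_eq_inv_mul]

lemma invsq (n : ℕ) : ∑ s ∈ range n, (((s : ℝ) + 1)⁻¹)^2 ≤ 2 - (n : ℝ)⁻¹ := by
  induction n with
  | zero => simp
  | succ n ih =>
    rw [sum_range_succ]
    rcases Nat.eq_zero_or_pos n with h | h
    · subst h; norm_num
    have hn : (0:ℝ) < n := by exact_mod_cast h
    have key : (((n:ℝ)+1)⁻¹)^2 + ((n:ℝ)+1)⁻¹ ≤ (n:ℝ)⁻¹ := by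
      rw [sq]
      have h1 : ((n:ℝ)+1)⁻¹ * ((n:ℝ)+1)⁻¹ ≤ (n:ℝ)⁻¹ * ((n:ℝ)+1)⁻¹ := by
        gcongr
        linarith
      have h2 : (n:ℝ)⁻¹ - ((n:ℝ)+1)⁻¹ = (n:ℝ)⁻¹ * ((n:ℝ)+1)⁻¹ := by
        field_simp
        ring
      linarith
    push_cast
    linarith

lemma slln {Ω : Type*} {m0 : MeasurableSpace Ω} (P : Measure Ω)
    [IsProbabilityMeasure P] (F : Filtration ℕ m0) (X : ℕ → Ω → ℝ) (b : ℝ) (hb : 0 < b)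
    (hmeas : ∀ t, StronglyMeasurable[F (t + 1)] (X t))
    (hbound : ∀ t, ∀ᵐ ω ∂P, |X t ω| ≤ b) :
    ∀ᵐ ω ∂P, Tendsto
      (fun n : ℕ => (∑ s ∈ range n, (X s ω - (P[X s | F s]) ω)) / n) atTop (𝓝 0) := by
  set ν : ℕ → Ω → ℝ := fun s => P[X s | F s] with hνdef
  set Y : ℕ → Ω → ℝ := fun s ω => X s ω - ν s ω with hYdef
  set M : ℕ → Ω → ℝ := fun n ω => ∑ s ∈ range n, Y s ω / (s + 1) with hMdef
  have hXint : ∀ t, Integrable (X t) P := fun t =>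
    Integrable.mono' (integrable_const b) ((hmeas t).mono (F.le _)).aestronglyMeasurable
      ((hbound t).mono fun ω h => by rwa [Real.norm_eq_abs])
  have hνmeas : ∀ s, StronglyMeasurable[F s] (ν s) := fun s => stronglyMeasurable_condExp
  have hνint : ∀ s, Integrable (ν s) P := fun s => integrable_condExp
  have hνbdd : ∀ s, ∀ᵐ ω ∂P, |ν s ω| ≤ b := by
    intro s
    have hb' : (b.toNNReal : ℝ) = b := Real.coe_toNNReal b hb.le
    have h1 : ∀ᵐ ω ∂P, |X s ω| ≤ (b.toNNReal : ℝ) := by rw [hb']; exact hbound s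
    have := ae_bdd_condExp_of_ae_bdd (m := F s) (μ := P) h1
    rw [hb'] at this; exact this
  have hYmeas : ∀ s, StronglyMeasurable[F (s + 1)] (Y s) := fun s =>
    (hmeas s).sub ((hνmeas s).mono (F.mono s.le_succ))
  have hYint : ∀ s, Integrable (Y s) P := fun s => (hXint s).sub (hνint s)
  have hYbdd : ∀ s, ∀ᵐ ω ∂P, |Y s ω| ≤ 2 * b := by
    intro s
    filter_upwards [hbound s, hνbdd s] with ω h1 h2
    calc |X s ω - ν s ω| ≤ |X s ω| + |ν s ω| := abs_sub _ _
      _ ≤ 2 * b := by linarith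
  have hMmeas : ∀ n, StronglyMeasurable[F n] (M n) := by
    intro n
    apply Finset.stronglyMeasurable_fun_sum
    intro s hs
    exact ((hYmeas s).mono (F.mono (mem_range.mp hs))).mul stronglyMeasurable_const
  have hMbdd : ∀ n, ∀ᵐ ω ∂P, |M n ω| ≤ 2 * b * n := by
    intro n
    filter_upwards [ae_all_iff.2 hYbdd] with ω hω
    calc |M n ω| ≤ ∑ s ∈ range n, |Y s ω / (s + 1)| := Finset.abs_sum_le_sum_abs _ _
      _ ≤ ∑ s ∈ range n, 2 * b := by
          apply Finset.sum_le_sum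
          intro s _
          rw [abs_div, abs_of_pos (by positivity : (0:ℝ) < (s:ℝ) + 1)]
          calc |Y s ω| / ((s:ℝ) + 1) ≤ |Y s ω| / 1 := by
                apply div_le_div_of_nonneg_left (abs_nonneg _) one_pos; push_cast; linarith
            _ = |Y s ω| := div_one _
            _ ≤ 2 * b := hω s
      _ = 2 * b * n := by rw [Finset.sum_const, card_range, nsmul_eq_mul]; ring
  have hMint : ∀ n, Integrable (M n) P := fun n =>
    Integrable.mono' (integrable_const (2 * b * n))
      ((hMmeas n).mono (F.le n)).aestronglyMeasurable
      ((hMbdd n).mono fun ω h => by rwa [Real.norm_eq_abs])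
  have hY0 : ∀ s, P[Y s | F s] =ᵐ[P] 0 := by
    intro s
    have hYs : Y s = X s - ν s := rfl
    rw [hYs]
    refine (condExp_sub (hXint s) (hνint s) (F s)).trans ?_
    rw [condExp_of_stronglyMeasurable (F.le s) (hνmeas s) (hνint s)]
    filter_upwards with ω
    simp [hνdef]
  have hmart : Martingale M F P := by
    apply martingale_nat (fun n => hMmeas n) hMint
    intro n
    have hsplit : M (n + 1) = M n + (((n:ℝ) + 1)⁻¹ • Y n) := by
      funext ω
      simp only [hMdef, sum_range_succ, Pi.add_apply, Pi.smul_apply, smul_eq_mul,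
        div_eq_inv_mul]
    rw [hsplit]
    refine EventuallyEq.symm ?_
    refine (condExp_add (hMint n) ((hYint n).smul _) (F n)).trans ?_
    rw [condExp_of_stronglyMeasurable (F.le n) (hMmeas n) (hMint n)]
    filter_upwards [condExp_smul (((n:ℝ) + 1)⁻¹) (Y n) (m := F n) (μ := P), hY0 n]
      with ω h1 h2
    simp only [Pi.add_apply, h1, Pi.smul_apply, h2, Pi.zero_apply, smul_eq_mul,
      mul_zero, add_zero]
  have hprodint : ∀ n, Integrable (fun ω => M n ω * Y n ω) P := by
    intro n
    refine Integrable.mono' (integrable_const ((2 * b * n) * (2 * b)))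
      (((hMmeas n).mono (F.le n)).mul ((hYmeas n).mono (F.le _))).aestronglyMeasurable ?_
    filter_upwards [hMbdd n, hYbdd n] with ω h1 h2
    rw [Real.norm_eq_abs, abs_mul]
    exact mul_le_mul h1 h2 (abs_nonneg _) (by positivity)
  have hsqint : ∀ n, Integrable (fun ω => (M n ω) ^ 2) P := by
    intro n
    have hm2 : StronglyMeasurable (fun ω => (M n ω) ^ 2) := by
      have := ((hMmeas n).mono (F.le n)).mul ((hMmeas n).mono (F.le n))
      have e : (fun ω => (M n ω) ^ 2) = M n * M n := by funext ω; simp [sq]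
      rw [e]; exact this
    refine Integrable.mono' (integrable_const ((2 * b * n) ^ 2))
      hm2.aestronglyMeasurable ?_
    filter_upwards [hMbdd n] with ω h1
    rw [Real.norm_eq_abs, abs_pow]
    exact pow_le_pow_left₀ (abs_nonneg _) h1 2
  have hYsqint : ∀ n, Integrable (fun ω => (Y n ω) ^ 2) P := by
    intro n
    have hy2 : StronglyMeasurable (fun ω => (Y n ω) ^ 2) := by
      have := ((hYmeas n).mono (F.le _)).mul ((hYmeas n).mono (F.le _))
      have e : (fun ω => (Y n ω) ^ 2) = Y n * Y n := by funext ω; simp [sq]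
      rw [e]; exact this
    refine Integrable.mono' (integrable_const ((2 * b) ^ 2))
      hy2.aestronglyMeasurable ?_
    filter_upwards [hYbdd n] with ω h1
    rw [Real.norm_eq_abs, abs_pow]
    exact pow_le_pow_left₀ (abs_nonneg _) h1 2
  have hcross : ∀ n, ∫ ω, M n ω * Y n ω ∂P = 0 := by
    intro n
    have h1 : P[fun ω => M n ω * Y n ω | F n] =ᵐ[P] M n * P[Y n | F n] :=
      condExp_mul_of_stronglyMeasurable_left (hMmeas n) (hprodint n) (hYint n)
    have h2 : P[fun ω => M n ω * Y n ω | F n] =ᵐ[P] 0 := by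
      filter_upwards [h1, hY0 n] with ω e1 e2
      simp [e1, Pi.mul_apply, e2]
    calc ∫ ω, M n ω * Y n ω ∂P = ∫ ω, (P[fun ω => M n ω * Y n ω | F n]) ω ∂P :=
          (integral_condExp (F.le n)).symm
      _ = ∫ ω, (0 : Ω → ℝ) ω ∂P := integral_congr_ae h2
      _ = 0 := by simp
  have hvar : ∀ n, ∫ ω, (M n ω) ^ 2 ∂P ≤ 4 * b ^ 2 * ∑ s ∈ range n, (((s:ℝ) + 1)⁻¹) ^ 2 := by
    intro n
    induction n with
    | zero => simp [hMdef]
    | succ n ih =>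
      set c : ℝ := ((n:ℝ) + 1)⁻¹ with hc
      have e : ∀ ω, (M (n + 1) ω) ^ 2
          = ((M n ω) ^ 2 + (2 * c) * (M n ω * Y n ω)) + c ^ 2 * (Y n ω) ^ 2 := by
        intro ω
        simp only [hMdef, sum_range_succ, div_eq_mul_inv]
        ring
      have hYsqb : ∫ ω, (Y n ω) ^ 2 ∂P ≤ 4 * b ^ 2 := by
        have : ∫ ω, (Y n ω) ^ 2 ∂P ≤ ∫ _ω, (2 * b) ^ 2 ∂P := by
          apply integral_mono_ae (hYsqint n) (integrable_const _)
          filter_upwards [hYbdd n] with ω h1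
          calc (Y n ω) ^ 2 = |Y n ω| ^ 2 := (sq_abs _).symm
            _ ≤ (2 * b) ^ 2 := pow_le_pow_left₀ (abs_nonneg _) h1 2
        rwa [integral_const, probReal_univ, one_smul,
          (by ring : (2 * b) ^ 2 = 4 * b ^ 2)] at this
      calc ∫ ω, (M (n + 1) ω) ^ 2 ∂P
          = ∫ ω, (((M n ω) ^ 2 + (2 * c) * (M n ω * Y n ω)) + c ^ 2 * (Y n ω) ^ 2) ∂P :=
            integral_congr_ae (Eventually.of_forall e)
        _ = (∫ ω, (M n ω) ^ 2 ∂P + (2 * c) * ∫ ω, M n ω * Y n ω ∂P)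
              + c ^ 2 * ∫ ω, (Y n ω) ^ 2 ∂P := by
            have i1 : Integrable (fun ω => (2 * c) * (M n ω * Y n ω)) P :=
              (hprodint n).const_mul _
            have i2 : Integrable (fun ω => (M n ω) ^ 2 + (2 * c) * (M n ω * Y n ω)) P :=
              (hsqint n).add i1
            have i3 : Integrable (fun ω => c ^ 2 * (Y n ω) ^ 2) P :=
              (hYsqint n).const_mul _
            rw [integral_add i2 i3, integral_add (hsqint n) i1,
              integral_const_mul, integral_const_mul]
        _ = ∫ ω, (M n ω) ^ 2 ∂P + c ^ 2 * ∫ ω, (Y n ω) ^ 2 ∂P := by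
            rw [hcross n]; ring
        _ ≤ 4 * b ^ 2 * ∑ s ∈ range n, (((s:ℝ) + 1)⁻¹) ^ 2 + c ^ 2 * (4 * b ^ 2) := by
            have := mul_le_mul_of_nonneg_left hYsqb (sq_nonneg c)
            linarith
        _ = 4 * b ^ 2 * ∑ s ∈ range (n + 1), (((s:ℝ) + 1)⁻¹) ^ 2 := by
            rw [sum_range_succ]; ring
  have hL1 : ∀ n, eLpNorm (M n) 1 P ≤ (((1 + 8 * b ^ 2).toNNReal : ℝ≥0) : ℝ≥0∞) := by
    intro n
    have habs : ∫ ω, ‖M n ω‖ ∂P ≤ 1 + 8 * b ^ 2 := by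
      have h1 : ∫ ω, ‖M n ω‖ ∂P ≤ ∫ ω, (1 + (M n ω) ^ 2) ∂P := by
        have i4 : Integrable (fun ω => 1 + (M n ω) ^ 2) P := (integrable_const 1).add (hsqint n)
        apply integral_mono_ae (hMint n).norm i4
        filter_upwards with ω
        rw [Real.norm_eq_abs]
        nlinarith [sq_nonneg (|M n ω| - 1), sq_abs (M n ω)]
      have h2 : ∫ ω, (1 + (M n ω) ^ 2) ∂P = 1 + ∫ ω, (M n ω) ^ 2 ∂P := by
        rw [integral_add (integrable_const 1) (hsqint n), integral_const, probReal_univ,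
          one_smul]
      have h3 : ∫ ω, (M n ω) ^ 2 ∂P ≤ 8 * b ^ 2 := by
        have h4 := hvar n
        have h5 : ∑ s ∈ range n, (((s:ℝ) + 1)⁻¹) ^ 2 ≤ 2 := by
          have h6 := invsq n
          have h7 : (0:ℝ) ≤ (n:ℝ)⁻¹ := by positivity
          linarith
        nlinarith [sq_nonneg b]
      linarith
    have : eLpNorm (M n) 1 P = ENNReal.ofReal (∫ ω, ‖M n ω‖ ∂P) := by
      rw [eLpNorm_one_eq_lintegral_enorm, ← ofReal_integral_norm_eq_lintegral_enorm (hMint n)]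
    rw [this]
    exact le_trans (ENNReal.ofReal_le_ofReal habs) (le_of_eq rfl)
  have conv := hmart.submartingale.exists_ae_tendsto_of_bdd hL1
  filter_upwards [conv] with ω hω
  obtain ⟨c, hc⟩ := hω
  exact kron (fun s => Y s ω) c hc

end Aux

/-- Convergence step of Theorem 4.5: if each individual's conditional drift is
(M/N)f_i(U_i(t)) − (1 − M/N)g_i(U_i(t)) with f_i nondecreasing tending to f⁺,
g_i nonincreasing tending to g⁻, and U_i(t) → ∞ a.s., then the growth rate
(U_i(t) − U_i(0))/t converges a.s. to (M/N)f⁺ − ((N−M)/N)g⁻ for every i. -/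
theorem stmt_14 {Ω : Type*} {m0 : MeasurableSpace Ω} (P : Measure Ω)
    [IsProbabilityMeasure P] (F : Filtration ℕ m0)
    (N M : ℕ) (hN : 0 < N) (hM : 0 < M) (hMN : M ≤ N)
    (U : Fin N → ℕ → Ω → ℝ) (f g : Fin N → ℝ → ℝ) (fp gm b : ℝ) (hb : 0 < b)
    (hadapt : ∀ i, Adapted F (U i))
    (hbound : ∀ i t, ∀ᵐ ω ∂P, |U i (t + 1) ω - U i t ω| ≤ b)
    (hfmono : ∀ i, Monotone (f i)) (hgmono : ∀ i, Antitone (g i))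
    (hflim : ∀ i, Tendsto (f i) atTop (nhds fp))
    (hglim : ∀ i, Tendsto (g i) atTop (nhds gm))
    (hdrift : ∀ i t, ∀ᵐ ω ∂P,
      (P[fun ω' => U i (t + 1) ω' - U i t ω' | F t]) ω
        = ((M : ℝ) / N) * f i (U i t ω) - (1 - (M : ℝ) / N) * g i (U i t ω))
    (hinf : ∀ᵐ ω ∂P, ∀ i, Tendsto (fun t => U i t ω) atTop atTop) :
    ∀ᵐ ω ∂P, ∀ i,
      Tendsto (fun t : ℕ => (U i t ω - U i 0 ω) / t) atTop
        (nhds (((M : ℝ) / N) * fp - (((N : ℝ) - M) / N) * gm)) := by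
  have key : ∀ i : Fin N, ∀ᵐ ω ∂P,
      Tendsto (fun t : ℕ => (U i t ω - U i 0 ω) / t) atTop
        (𝓝 (((M : ℝ) / N) * fp - (((N : ℝ) - M) / N) * gm)) := by
    intro i
    have hA := slln P F (fun t ω => U i (t + 1) ω - U i t ω) b hb
      (fun t => (hadapt i (t + 1)).stronglyMeasurable.sub ((hadapt i t).stronglyMeasurable.mono (F.mono t.le_succ)))
      (hbound i)
    have hB : ∀ᵐ ω ∂P, ∀ t, (P[fun ω' => U i (t + 1) ω' - U i t ω' | F t]) ω
        = ((M : ℝ) / N) * f i (U i t ω) - (1 - (M : ℝ) / N) * g i (U i t ω) :=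
      ae_all_iff.2 (hdrift i)
    filter_upwards [hA, hB, hinf] with ω h1 h2 h3
    set L : ℝ := ((M : ℝ) / N) * fp - (1 - (M : ℝ) / N) * gm with hL
    have hNne : (N : ℝ) ≠ 0 := Nat.cast_ne_zero.2 hN.ne'
    have hLeq : L = ((M : ℝ) / N) * fp - (((N : ℝ) - M) / N) * gm := by
      rw [hL]
      congr 1
      field_simp
    rw [← hLeq]
    have hν : Tendsto (fun t : ℕ =>
        (P[fun ω' => U i (t + 1) ω' - U i t ω' | F t]) ω) atTop (𝓝 L) := by
      have hf' : Tendsto (fun t : ℕ => f i (U i t ω)) atTop (𝓝 fp) := (hflim i).comp (h3 i)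
      have hg' : Tendsto (fun t : ℕ => g i (U i t ω)) atTop (𝓝 gm) := (hglim i).comp (h3 i)
      exact ((hf'.const_mul ((M : ℝ) / N)).sub
        (hg'.const_mul (1 - (M : ℝ) / N))).congr fun t => (h2 t).symm
    have hcez := hν.cesaro
    have hcomb := h1.add hcez
    rw [zero_add] at hcomb
    apply hcomb.congr
    intro n
    have hsum : ∑ s ∈ range n, (U i (s + 1) ω - U i s ω) = U i n ω - U i 0 ω :=
      Finset.sum_range_sub (fun s => U i s ω) n
    simp only [Finset.sum_sub_distrib, sub_div, inv_mul_eq_div, ← add_div,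
      sub_add_cancel, hsum]
  exact ae_all_iff.2 key
end

section
/- Define w_i = (1/(f_i⁻ + g_i⁺)) · (Σ_j 1/(f_j⁻ + g_j⁺))⁻¹ and Ū(t) = Σ_i w_i U_i(t). If the allocation a(t) ∈ {0,1}^N satisfies Σ_i a_i(t) = M and E[U_i(t+1) − U_i(t) | F_t] = a_i(t) f_i(U_i(t)) − (1 − a_i(t)) g_i(U_i(t)) with f_i(x) ≥ f_i⁻ > 0 and g_i(x) ≤ g_i⁺ for all x, then E[Ū(t+1) − Ū(t) | F_t] ≥ ζ̄((f_1⁻,…,f_N⁻),(g_1⁺,…,g_N⁺)). -/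
open MeasureTheory

/-- Lower drift bound for the weighted welfare Ū (ineq. (10)–(11)): regardless
of which M individuals are treated, E[Ū(t+1) − Ū(t) | F_t] ≥ ζ̄((f_i⁻),(g_i⁺)). -/
theorem stmt_15 {Ω : Type*} {m0 : MeasurableSpace Ω} (P : Measure Ω)
    [IsProbabilityMeasure P] (F : Filtration ℕ m0)
    (N M : ℕ) (hN : 0 < N) (hM : 0 < M) (hMN : M ≤ N)
    (U : Fin N → ℕ → Ω → ℝ) (a : Fin N → ℕ → Ω → ℝ)
    (f g : Fin N → ℝ → ℝ) (fminus gplus : Fin N → ℝ)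
    (hfm : ∀ i, 0 < fminus i) (hgp : ∀ i, 0 < gplus i)
    (hflb : ∀ i x, fminus i ≤ f i x) (hgub : ∀ i x, g i x ≤ gplus i)
    (hgpos : ∀ i x, 0 < g i x)
    (ha01 : ∀ i t ω, a i t ω = 0 ∨ a i t ω = 1)
    (hasum : ∀ t ω, ∑ i, a i t ω = (M : ℝ))
    (hint : ∀ i t, Integrable (fun ω => U i (t + 1) ω - U i t ω) P)
    (hdrift : ∀ i t, ∀ᵐ ω ∂P,
      (P[fun ω' => U i (t + 1) ω' - U i t ω' | F t]) ω
        = a i t ω * f i (U i t ω) - (1 - a i t ω) * g i (U i t ω)) :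
    ∀ t, ∀ᵐ ω ∂P,
      ((M : ℝ) - ∑ i, gplus i / (fminus i + gplus i))
          * (∑ j, 1 / (fminus j + gplus j))⁻¹
        ≤ (P[fun ω' =>
              (∑ i, (1 / (fminus i + gplus i))
                  * (∑ j, 1 / (fminus j + gplus j))⁻¹ * U i (t + 1) ω')
              - (∑ i, (1 / (fminus i + gplus i))
                  * (∑ j, 1 / (fminus j + gplus j))⁻¹ * U i t ω') | F t]) ω := by
  intro t
  have hdpos : ∀ i, 0 < fminus i + gplus i := fun i => add_pos (hfm i) (hgp i)
  have hSpos : 0 < ∑ j, 1 / (fminus j + gplus j) :=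
    Finset.sum_pos (fun j _ => one_div_pos.2 (hdpos j)) ⟨⟨0, hN⟩, Finset.mem_univ _⟩
  set c : Fin N → ℝ := fun i =>
    (1 / (fminus i + gplus i)) * (∑ j, 1 / (fminus j + gplus j))⁻¹ with hc
  have hcpos : ∀ i, 0 < c i := fun i =>
    mul_pos (one_div_pos.2 (hdpos i)) (inv_pos.2 hSpos)
  have hfun : (fun ω' => (∑ i, c i * U i (t+1) ω') - ∑ i, c i * U i t ω')
      = fun ω' => ∑ i, c i * (U i (t+1) ω' - U i t ω') := by
    funext ω'; rw [← Finset.sum_sub_distrib]; simp [mul_sub]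
  have hsmul : ∀ i, (fun ω' => c i * (U i (t+1) ω' - U i t ω'))
      = c i • (fun ω' => U i (t+1) ω' - U i t ω') := fun i => rfl
  have hce : P[(fun ω' => ∑ i, c i * (U i (t+1) ω' - U i t ω')) | F t]
      =ᵐ[P] fun ω => ∑ i, c i * (P[(fun ω' => U i (t+1) ω' - U i t ω') | F t]) ω := by
    have h1 : P[(fun ω' => ∑ i, c i * (U i (t+1) ω' - U i t ω')) | F t]
        =ᵐ[P] ∑ i, P[(fun ω' => c i * (U i (t+1) ω' - U i t ω')) | F t] := by
      have heq : (fun ω' => ∑ i, c i * (U i (t+1) ω' - U i t ω'))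
          = ∑ i : Fin N, fun ω' => c i * (U i (t+1) ω' - U i t ω') := by
        funext ω'; simp
      rw [heq]
      exact condExp_finset_sum (μ := P) (m := F t)
        (f := fun i ω' => c i * (U i (t+1) ω' - U i t ω')) (s := Finset.univ)
        (fun i _ => ((hint i t).const_mul (c i)))
    refine h1.trans ?_
    have h2 : ∀ i : Fin N, P[(fun ω' => c i * (U i (t+1) ω' - U i t ω')) | F t]
        =ᵐ[P] fun ω => c i * (P[(fun ω' => U i (t+1) ω' - U i t ω') | F t]) ω := by
      intro i
      rw [hsmul i]
      exact (condExp_smul (c i) _ (F t)).trans (by rfl)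
    have := eventuallyEq_sum (s := Finset.univ) (fun i _ => h2 i)
    filter_upwards [this] with ω hω
    simpa using hω
  have hdr := (ae_all_iff).2 (fun i => hdrift i t)
  filter_upwards [hce, hdr] with ω hω hdω
  rw [show (fun ω' =>
        (∑ i, (1 / (fminus i + gplus i)) * (∑ j, 1 / (fminus j + gplus j))⁻¹ * U i (t + 1) ω')
        - (∑ i, (1 / (fminus i + gplus i)) * (∑ j, 1 / (fminus j + gplus j))⁻¹ * U i t ω'))
      = fun ω' => ∑ i, c i * (U i (t+1) ω' - U i t ω') from hfun, hω]
  have hterm : ∀ i : Fin N,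
      c i * (a i t ω * fminus i - (1 - a i t ω) * gplus i)
        ≤ c i * (P[(fun ω' => U i (t + 1) ω' - U i t ω') | F t]) ω := by
    intro i
    rw [hdω i]
    refine mul_le_mul_of_nonneg_left ?_ (hcpos i).le
    rcases ha01 i t ω with h | h <;> rw [h] <;> simp
    · exact hgub i _
    · exact hflb i _
  have hkey : ∑ i, c i * (a i t ω * fminus i - (1 - a i t ω) * gplus i)
      = ((M : ℝ) - ∑ i, gplus i / (fminus i + gplus i))
          * (∑ j, 1 / (fminus j + gplus j))⁻¹ := by
    have h1 : ∀ i : Fin N, c i * (a i t ω * fminus i - (1 - a i t ω) * gplus i)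
        = (∑ j, 1 / (fminus j + gplus j))⁻¹ * (a i t ω - gplus i / (fminus i + gplus i)) := by
      intro i
      have hdne : fminus i + gplus i ≠ 0 := (hdpos i).ne'
      rw [hc]
      field_simp
      ring
    rw [Finset.sum_congr rfl (fun i _ => h1 i), ← Finset.mul_sum,
      Finset.sum_sub_distrib, hasum]
    ring
  calc ((M : ℝ) - ∑ i, gplus i / (fminus i + gplus i))
          * (∑ j, 1 / (fminus j + gplus j))⁻¹
      = ∑ i, c i * (a i t ω * fminus i - (1 - a i t ω) * gplus i) := hkey.symm
    _ ≤ ∑ i, c i * (P[(fun ω' => U i (t + 1) ω' - U i t ω') | F t]) ω :=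
        Finset.sum_le_sum (fun i _ => hterm i)
end

section
/- Define w̃_i = (1/(f_i⁺ + g_i⁻)) · (Σ_j 1/(f_j⁺ + g_j⁻))⁻¹ and Ũ(t) = Σ_i w̃_i U_i(t). Under the same intervention model with f_i(x) ≤ f_i⁺ and g_i(x) ≥ g_i⁻ > 0 for all x and Σ_i a_i(t) = M with a_i(t) ∈ {0,1}, the weighted welfare satisfies E[Ũ(t+1) − Ũ(t) | F_t] ≤ ζ̄((f_1⁺,…,f_N⁺),(g_1⁻,…,g_N⁻)), regardless of the policy. -/
open MeasureTheory

/-- Upper drift bound for the weighted welfare Ũ (ineq. (13)–(14)): regardless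
of the policy, E[Ũ(t+1) − Ũ(t) | F_t] ≤ ζ̄((f_i⁺),(g_i⁻)). -/
theorem stmt_16 {Ω : Type*} {m0 : MeasurableSpace Ω} (P : Measure Ω)
    [IsProbabilityMeasure P] (F : Filtration ℕ m0)
    (N M : ℕ) (hN : 0 < N) (hM : 0 < M) (hMN : M ≤ N)
    (U : Fin N → ℕ → Ω → ℝ) (a : Fin N → ℕ → Ω → ℝ)
    (f g : Fin N → ℝ → ℝ) (fplus gminus : Fin N → ℝ)
    (hfp : ∀ i, 0 < fplus i) (hgm : ∀ i, 0 < gminus i)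
    (hfub : ∀ i x, f i x ≤ fplus i) (hglb : ∀ i x, gminus i ≤ g i x)
    (ha01 : ∀ i t ω, a i t ω = 0 ∨ a i t ω = 1)
    (hasum : ∀ t ω, ∑ i, a i t ω = (M : ℝ))
    (hint : ∀ i t, Integrable (fun ω => U i (t + 1) ω - U i t ω) P)
    (hdrift : ∀ i t, ∀ᵐ ω ∂P,
      (P[fun ω' => U i (t + 1) ω' - U i t ω' | F t]) ω
        = a i t ω * f i (U i t ω) - (1 - a i t ω) * g i (U i t ω)) :
    ∀ t, ∀ᵐ ω ∂P,
      (P[fun ω' =>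
            (∑ i, (1 / (fplus i + gminus i))
                * (∑ j, 1 / (fplus j + gminus j))⁻¹ * U i (t + 1) ω')
            - (∑ i, (1 / (fplus i + gminus i))
                * (∑ j, 1 / (fplus j + gminus j))⁻¹ * U i t ω') | F t]) ω
        ≤ ((M : ℝ) - ∑ i, gminus i / (fplus i + gminus i))
            * (∑ j, 1 / (fplus j + gminus j))⁻¹ := by
  intro t
  have : Nonempty (Fin N) := ⟨⟨0, hN⟩⟩
  set S : ℝ := ∑ j, 1 / (fplus j + gminus j) with hS
  set w : Fin N → ℝ := fun i => (1 / (fplus i + gminus i)) * S⁻¹ with hw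
  have hfg : ∀ i, 0 < fplus i + gminus i := fun i => add_pos (hfp i) (hgm i)
  have hSpos : 0 < S :=
    Finset.sum_pos (fun i _ => one_div_pos.mpr (hfg i)) Finset.univ_nonempty
  have hwpos : ∀ i, 0 < w i := fun i =>
    mul_pos (one_div_pos.mpr (hfg i)) (inv_pos.mpr hSpos)
  -- rewrite the function inside the conditional expectation
  have hfun : (fun ω' =>
        (∑ i, w i * U i (t + 1) ω') - ∑ i, w i * U i t ω')
      = ∑ i, w i • (fun ω' => U i (t + 1) ω' - U i t ω') := by
    funext ω'
    simp only [Finset.sum_apply, Pi.smul_apply, smul_eq_mul, mul_sub,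
      Finset.sum_sub_distrib]
  have hcond : P[(fun ω' =>
        (∑ i, w i * U i (t + 1) ω') - ∑ i, w i * U i t ω') | F t]
      =ᵐ[P] fun ω => ∑ i, w i * (P[fun ω' => U i (t + 1) ω' - U i t ω' | F t]) ω := by
    rw [hfun]
    have h1 := condExp_finset_sum (m := F t) (μ := P) (s := Finset.univ)
      (f := fun i => w i • (fun ω' => U i (t + 1) ω' - U i t ω'))
      (fun i _ => (hint i t).smul (w i))
    refine h1.trans ?_
    have h2 : ∀ i : Fin N,
        P[(w i • (fun ω' => U i (t + 1) ω' - U i t ω')) | F t]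
          =ᵐ[P] w i • P[fun ω' => U i (t + 1) ω' - U i t ω' | F t] :=
      fun i => condExp_smul (w i) _ _
    have h3 : ∀ᵐ ω ∂P, ∀ i : Fin N,
        (P[(w i • (fun ω' => U i (t + 1) ω' - U i t ω')) | F t]) ω
          = (w i • P[fun ω' => U i (t + 1) ω' - U i t ω' | F t]) ω :=
      ae_all_iff.mpr fun i => h2 i
    filter_upwards [h3] with ω hω
    simp only [Finset.sum_apply]
    exact Finset.sum_congr rfl fun i _ => by rw [hω i]; simp [smul_eq_mul]
  have hdrifts : ∀ᵐ ω ∂P, ∀ i : Fin N,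
      (P[fun ω' => U i (t + 1) ω' - U i t ω' | F t]) ω
        = a i t ω * f i (U i t ω) - (1 - a i t ω) * g i (U i t ω) :=
    ae_all_iff.mpr fun i => hdrift i t
  filter_upwards [hcond, hdrifts] with ω hcω hdω
  rw [hcω]
  have hle : ∑ i, w i * (P[fun ω' => U i (t + 1) ω' - U i t ω' | F t]) ω
      ≤ ∑ i, w i * (a i t ω * fplus i - (1 - a i t ω) * gminus i) := by
    refine Finset.sum_le_sum fun i _ => ?_
    rw [hdω i]
    refine mul_le_mul_of_nonneg_left ?_ (hwpos i).le
    rcases ha01 i t ω with h | h <;> simp only [h] <;>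
      [skip; skip] <;>
      nlinarith [hfub i (U i t ω), hglb i (U i t ω)]
  refine hle.trans (le_of_eq ?_)
  have hterm : ∀ i : Fin N,
      w i * (a i t ω * fplus i - (1 - a i t ω) * gminus i)
        = (a i t ω - gminus i / (fplus i + gminus i)) * S⁻¹ := by
    intro i
    rw [hw]
    have hne : fplus i + gminus i ≠ 0 := (hfg i).ne'
    field_simp
    ring
  calc ∑ i, w i * (a i t ω * fplus i - (1 - a i t ω) * gminus i)
      = ∑ i, (a i t ω - gminus i / (fplus i + gminus i)) * S⁻¹ :=
        Finset.sum_congr rfl fun i _ => hterm i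
    _ = ((∑ i, a i t ω) - ∑ i, gminus i / (fplus i + gminus i)) * S⁻¹ := by
        rw [← Finset.sum_mul, Finset.sum_sub_distrib]
    _ = ((M : ℝ) - ∑ i, gminus i / (fplus i + gminus i)) * S⁻¹ := by
        rw [hasum t ω]
end
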